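/- Let g_1, g_2 ∈ R^m be nonzero with ⟨g_1, g_2⟩ < 0, and d the PCGrad update from the previous statement. Then d = 0 if and only if g_1 and g_2 are anti-parallel, i.e., cos angle(g_1, g_2) = -1. -/
import Mathlib


open scoped RealInnerProductSpace

/-- The two-task PCGrad update vanishes iff the gradients are anti-parallel. -/
theorem stmt_19 (m : ℕ) (g₁ g₂ : EuclideanSpace ℝ (Fin m))
    (h₁ : g₁ ≠ 0) (h₂ : g₂ ≠ 0) (hconf : ⟪g₁, g₂⟫ < 0) :
    let d := (1 / 2 : ℝ) •
      ((g₁ - (⟪g₁, g₂⟫ / ‖g₂‖ ^ 2) • g₂) + (g₂ - (⟪g₁, g₂⟫ / ‖g₁‖ ^ 2) • g₁))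
    d = 0 ↔ ⟪g₁, g₂⟫ / (‖g₁‖ * ‖g₂‖) = -1 := by
  intro d
  have hn1 : (0:ℝ) < ‖g₁‖ := norm_pos_iff.mpr h₁
  have hn2 : (0:ℝ) < ‖g₂‖ := norm_pos_iff.mpr h₂
  set c : ℝ := ⟪g₁, g₂⟫ with hc
  have h21 : ⟪g₂, g₁⟫ = c := (real_inner_comm g₂ g₁).symm
  constructor
  · intro hd
    have h0 : ⟪g₁, d⟫ = 0 := by rw [hd, inner_zero_right]
    have hexp : ⟪g₁, d⟫ = (1/2) * (‖g₁‖^2 - c^2/‖g₂‖^2) := by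
      simp only [d, inner_smul_right, inner_add_right, inner_sub_right,
        real_inner_self_eq_norm_sq, ← hc]
      field_simp
      ring
    have hc2 : c^2 = ‖g₁‖^2 * ‖g₂‖^2 := by
      rw [hexp] at h0
      have h2 : (0:ℝ) < ‖g₂‖^2 := by positivity
      field_simp at h0
      nlinarith [h0]
    have hceq : c = -(‖g₁‖ * ‖g₂‖) := by nlinarith [hc2, hconf, mul_pos hn1 hn2]
    rw [hceq]
    field_simp
  · intro hcos
    have hceq : c = -(‖g₁‖ * ‖g₂‖) := by
      have hne : ‖g₁‖ * ‖g₂‖ ≠ 0 := by positivity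
      field_simp at hcos
      linarith
    have hinner : ⟪g₁, -g₂⟫ = ‖g₁‖ * ‖-g₂‖ := by
      rw [inner_neg_right, norm_neg, ← hc, hceq]; ring
    have key : ‖-g₂‖ • g₁ = ‖g₁‖ • (-g₂) := inner_eq_norm_mul_iff_real.mp hinner
    rw [norm_neg] at key
    set a : ℝ := ‖g₁‖ with ha
    set b : ℝ := ‖g₂‖ with hb
    have hg1 : g₁ = (-a / b) • g₂ := by
      have h := congrArg (fun v : EuclideanSpace ℝ (Fin m) => b⁻¹ • v) key
      simp only [smul_smul, smul_neg] at h
      rw [inv_mul_cancel₀ (ne_of_gt hn2), one_smul] at h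
      rw [h, show (-a/b : ℝ) = -(b⁻¹ * a) from by ring, neg_smul]
    show (1 / 2 : ℝ) • ((g₁ - (c / b ^ 2) • g₂) + (g₂ - (c / a ^ 2) • g₁)) = 0
    rw [hceq, hg1]
    match_scalars
    field_simp
    ring
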